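/- For t = diag(1_a, −1_b, 1, −1_b, 1_a) ∈ SO_{2n+1} with a + b = n, the trace of the adjoint action of t on the Lie algebra of SO_{2n+1} equals 2(a−b)^2 + 2(a−b) − n. -/

import Mathlib

open Matrix

/-- The antidiagonal matrix `J` of size `2n+1` with ones on the antidiagonal (0-indexed),
realizing the symmetric bilinear form defining `SO_{2n+1}`. -/
def antidiagJ (K : Type*) [Field K] (n : ℕ) :
    Matrix (Fin (2 * n + 1)) (Fin (2 * n + 1)) K :=
  fun i j => if (i : ℕ) + (j : ℕ) = 2 * n then 1 else 0

/-- The linear map `A ↦ A + J Aᵀ J`, whose kernel is the Lie algebra of `SO_{2n+1}`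
(the condition `A + J Aᵀ J⁻¹ = 0`, using `J⁻¹ = J`). -/
noncomputable def soDefMap (K : Type*) [Field K] (n : ℕ) :
    Matrix (Fin (2 * n + 1)) (Fin (2 * n + 1)) K →ₗ[K]
      Matrix (Fin (2 * n + 1)) (Fin (2 * n + 1)) K :=
  LinearMap.id +
    (LinearMap.mulLeft K (antidiagJ K n)).comp
      ((LinearMap.mulRight K (antidiagJ K n)).comp
        (Matrix.transposeLinearEquiv (Fin (2 * n + 1)) (Fin (2 * n + 1)) K K).toLinearMap)

/-- The Lie algebra of `SO_{2n+1}`: matrices `A` with `A + J Aᵀ J⁻¹ = 0`,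
equivalently `a_{ij} + a_{N+1-j, N+1-i} = 0` for `N = 2n+1` (1-indexed). -/
noncomputable def soLie (K : Type*) [Field K] (n : ℕ) :
    Submodule K (Matrix (Fin (2 * n + 1)) (Fin (2 * n + 1)) K) :=
  LinearMap.ker (soDefMap K n)

/-- The diagonal torus element `t = diag(1_a, −1_b, 1, −1_b, 1_a)` (where `a + b = n`). -/
def torusElt (K : Type*) [Field K] (n a b : ℕ) :
    Matrix (Fin (2 * n + 1)) (Fin (2 * n + 1)) K :=
  Matrix.diagonal fun i =>
    if (i : ℕ) < a then (1 : K)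
    else if (i : ℕ) < n then -1
    else if (i : ℕ) = n then 1
    else if (i : ℕ) ≤ n + b then -1
    else 1

section Aux

open Matrix

variable {K : Type*} [Field K] {n : ℕ}

lemma antidiagJ_mul (M : Matrix (Fin (2*n+1)) (Fin (2*n+1)) K) (i j : Fin (2*n+1)) :
    (antidiagJ K n * M) i j = M i.rev j := by
  rw [Matrix.mul_apply]
  rw [Finset.sum_eq_single i.rev]
  · simp [antidiagJ, Fin.rev]; omega
  · intro k _ hk
    have : (i : ℕ) + (k : ℕ) ≠ 2 * n := by
      intro h; apply hk; ext; simp [Fin.rev]; omega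
    simp [antidiagJ, this]
  · intro h; exact absurd (Finset.mem_univ _) h

lemma mul_antidiagJ (M : Matrix (Fin (2*n+1)) (Fin (2*n+1)) K) (i j : Fin (2*n+1)) :
    (M * antidiagJ K n) i j = M i j.rev := by
  rw [Matrix.mul_apply]
  rw [Finset.sum_eq_single j.rev]
  · simp [antidiagJ, Fin.rev]; omega
  · intro k _ hk
    have : (k : ℕ) + (j : ℕ) ≠ 2 * n := by
      intro h; apply hk; ext; simp [Fin.rev]; omega
    simp [antidiagJ, this]
  · intro h; exact absurd (Finset.mem_univ _) h

lemma antidiagJ_sq : antidiagJ K n * antidiagJ K n = 1 := by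
  ext i j
  rw [antidiagJ_mul]
  simp [antidiagJ, Matrix.one_apply, Fin.rev, Fin.ext_iff]
  have := i.isLt; have := j.isLt
  split_ifs <;> first | rfl | omega

lemma antidiagJ_transpose : (antidiagJ K n)ᵀ = antidiagJ K n := by
  ext i j; simp [antidiagJ, Matrix.transpose_apply]; rw [Nat.add_comm]
variable (K) in
def torusFun (n a b : ℕ) : Fin (2*n+1) → K := fun i =>
    if (i : ℕ) < a then (1 : K)
    else if (i : ℕ) < n then -1
    else if (i : ℕ) = n then 1
    else if (i : ℕ) ≤ n + b then -1
    else 1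

lemma torusElt_eq (n a b : ℕ) : torusElt K n a b = Matrix.diagonal (torusFun K n a b) := rfl

variable {a b : ℕ} (hab : a + b = n)

include hab in
lemma torusFun_rev (i : Fin (2*n+1)) : torusFun K n a b i.rev = torusFun K n a b i := by
  have := i.isLt
  simp only [torusFun, Fin.rev]
  split_ifs <;> first | rfl | omega

lemma torusFun_sq (i : Fin (2*n+1)) : torusFun K n a b i * torusFun K n a b i = 1 := by
  simp only [torusFun]
  split_ifs <;> simp

include hab in
lemma torus_J_comm : torusElt K n a b * antidiagJ K n = antidiagJ K n * torusElt K n a b := by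
  ext i j
  rw [antidiagJ_mul, mul_antidiagJ, torusElt_eq, Matrix.diagonal_apply, Matrix.diagonal_apply]
  have h1 : i.rev = j ↔ i = j.rev := by
    constructor <;> rintro rfl <;> simp
  by_cases h : i.rev = j
  · rw [if_pos h, if_pos (h1.mp h)]
    rw [torusFun_rev hab]
  · rw [if_neg h, if_neg (fun hh => h (h1.mpr hh))]
lemma soDefMap_apply (A : Matrix (Fin (2*n+1)) (Fin (2*n+1)) K) :
    soDefMap K n A = A + antidiagJ K n * (Aᵀ * antidiagJ K n) := by
  simp [soDefMap, LinearMap.mulLeft_apply, LinearMap.mulRight_apply]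

lemma soDefMap_sq (A : Matrix (Fin (2*n+1)) (Fin (2*n+1)) K) :
    soDefMap K n (soDefMap K n A) = (2 : K) • soDefMap K n A := by
  have hJ : antidiagJ K n * antidiagJ K n = 1 := antidiagJ_sq
  simp only [soDefMap_apply, Matrix.transpose_add, Matrix.transpose_mul, antidiagJ_transpose,
    two_smul K, Matrix.mul_add, Matrix.add_mul, ← Matrix.mul_assoc, hJ, Matrix.one_mul,
    Matrix.transpose_transpose]
  simp only [Matrix.mul_assoc, hJ, Matrix.mul_one]
  abel

lemma stdBasis_repr {m : Type*} [Fintype m] [DecidableEq m] (M : Matrix m m K) (p : m × m) :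
    (Matrix.stdBasis K m m).repr M p = M p.1 p.2 := by
  conv_lhs => rw [Matrix.matrix_eq_sum_single M]
  have h : ∀ (i j : m), Matrix.single i j (M i j)
      = M i j • Matrix.stdBasis K m m (i, j) := by
    intro i j
    rw [Matrix.stdBasis_eq_single, Matrix.smul_single, smul_eq_mul, mul_one]
  simp only [h, map_sum, _root_.map_smul, Module.Basis.repr_self, Finsupp.smul_apply,
    Finsupp.coe_smul, smul_eq_mul]
  rcases p with ⟨p1, p2⟩
  simp [Finsupp.single_apply, Prod.ext_iff, Finset.sum_ite_eq, Finset.sum_ite_eq',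
    ite_and, Finset.sum_ite_eq']

lemma trace_matrix_end {m : Type*} [Fintype m] [DecidableEq m]
    (f : Matrix m m K →ₗ[K] Matrix m m K) :
    LinearMap.trace K _ f = ∑ p : m × m, (f (Matrix.single p.1 p.2 1)) p.1 p.2 := by
  rw [LinearMap.trace_eq_matrix_trace K (Matrix.stdBasis K m m), Matrix.trace]
  simp only [Matrix.diag, LinearMap.toMatrix_apply, stdBasis_repr]
  exact Finset.sum_congr rfl fun p _ => by
    rcases p with ⟨i, j⟩; rw [Matrix.stdBasis_eq_single]
include hab in
lemma conj_comm (A : Matrix (Fin (2*n+1)) (Fin (2*n+1)) K) :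
    soDefMap K n (torusElt K n a b * A * torusElt K n a b)
      = torusElt K n a b * soDefMap K n A * torusElt K n a b := by
  set t := torusElt K n a b with ht0
  set J := antidiagJ K n with hJ0
  have hc : t * J = J * t := torus_J_comm hab
  have ht : tᵀ = t := Matrix.diagonal_transpose _
  have key : J * ((t * A * t)ᵀ * J) = t * (J * (Aᵀ * J)) * t := by
    rw [Matrix.transpose_mul, Matrix.transpose_mul, ht]
    simp only [← Matrix.mul_assoc]
    rw [← hc]
    rw [Matrix.mul_assoc (t * J * Aᵀ) t J]
    nth_rewrite 2 [hc]
    simp only [Matrix.mul_assoc]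
  rw [soDefMap_apply, soDefMap_apply, key, Matrix.mul_add, Matrix.add_mul]

include hab in
theorem stmt2' (Ad : soLie K n →ₗ[K] soLie K n)
    (hAd : ∀ A : soLie K n,
      (↑(Ad A) : Matrix (Fin (2 * n + 1)) (Fin (2 * n + 1)) K) =
        torusElt K n a b * (↑A : Matrix (Fin (2 * n + 1)) (Fin (2 * n + 1)) K) *
          torusElt K n a b) (hchar : (2 : K) ≠ 0) :
    LinearMap.trace K ↥(soLie K n) Ad =
      2 * ((a : K) - (b : K)) ^ 2 + 2 * ((a : K) - (b : K)) - (n : K) := by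
  classical
  set t := torusElt K n a b with ht0
  set P := soDefMap K n with hP0
  set C : Matrix (Fin (2*n+1)) (Fin (2*n+1)) K →ₗ[K] Matrix (Fin (2*n+1)) (Fin (2*n+1)) K :=
    LinearMap.mulLeft K t ∘ₗ LinearMap.mulRight K t with hC0
  have hCapp : ∀ A, C A = t * A * t := by
    intro A; simp [hC0, Matrix.mul_assoc]
  set R : Matrix (Fin (2*n+1)) (Fin (2*n+1)) K →ₗ[K] Matrix (Fin (2*n+1)) (Fin (2*n+1)) K :=
    LinearMap.id - (2⁻¹ : K) • P with hR0
  have hRapp : ∀ A, R A = A - (2⁻¹ : K) • P A := fun A => rfl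
  -- R is a projection onto soLie
  have hproj : LinearMap.IsProj (soLie K n) R := by
    constructor
    · intro A
      simp only [soLie, LinearMap.mem_ker, hRapp, map_sub, _root_.map_smul, ← hP0]
      rw [soDefMap_sq]
      rw [smul_smul, inv_mul_cancel₀ hchar, one_smul, sub_self]
    · intro x hx
      simp only [soLie, LinearMap.mem_ker, ← hP0] at hx
      rw [hRapp, hx, smul_zero, sub_zero]
  -- C preserves soLie
  have hCmem : ∀ x ∈ soLie K n, C x ∈ soLie K n := by
    intro x hx
    simp only [soLie, LinearMap.mem_ker, ← hP0] at hx ⊢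
    rw [hCapp, conj_comm hab, hx, Matrix.mul_zero, Matrix.zero_mul]
  -- Ad is the restriction of C
  have hAdC : Ad = C.restrict hCmem := by
    refine LinearMap.ext fun A => Subtype.ext ?_
    have h1 : (↑(C.restrict hCmem A) : Matrix (Fin (2*n+1)) (Fin (2*n+1)) K) = C A := rfl
    rw [hAd, h1, hCapp]
  -- the direct sum decomposition
  set N : Bool → Submodule K (Matrix (Fin (2*n+1)) (Fin (2*n+1)) K) :=
    fun s => Bool.rec (LinearMap.ker R) (soLie K n) s with hN0
  have hint : DirectSum.IsInternal N := by
    rw [DirectSum.isInternal_submodule_iff_isCompl N (i := true) (j := false)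
      (by simp) (by ext x; simp [Or.comm])]
    exact hproj.isCompl
  set f := C ∘ₗ R with hf0
  have hfmaps : ∀ s : Bool, Set.MapsTo f (N s) (N s) := by
    intro s x hx
    rcases s with _ | _
    · have hx' : R x = 0 := hx
      show f x ∈ LinearMap.ker R
      simp only [hf0, LinearMap.mem_ker, LinearMap.comp_apply, hx', map_zero]
    · have : R x = x := hproj.map_id x hx
      show f x ∈ soLie K n
      simp only [hf0, LinearMap.comp_apply, this]
      exact hCmem x hx
  have htr := LinearMap.trace_eq_sum_trace_restrict hint hfmaps
  -- identify the two restrictions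
  have htrue : f.restrict (hfmaps true) = C.restrict hCmem := by
    refine LinearMap.ext fun x => Subtype.ext ?_
    simp only [LinearMap.restrict_apply]
    show f ↑x = C ↑x
    have : R ↑x = ↑x := hproj.map_id ↑x x.2
    simp only [hf0, LinearMap.comp_apply, this]
  have hfalse : f.restrict (hfmaps false) = 0 := by
    refine LinearMap.ext fun x => Subtype.ext ?_
    show f ↑x = _
    have : R ↑x = 0 := x.2
    simp only [hf0, LinearMap.comp_apply, this, map_zero]
    rfl
  rw [Fintype.sum_bool, htrue, hfalse, map_zero, add_zero] at htr
  rw [hAdC, ← htr]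
  -- now compute the trace of f = C ∘ R on the full matrix space
  set d := torusFun K n a b with hd0
  set s := ∑ i, d i with hs0
  have e1 : ∀ (M : Matrix (Fin (2*n+1)) (Fin (2*n+1)) K) (i j : Fin (2*n+1)),
      (t * M * t) i j = d i * M i j * d j := by
    intro M i j
    rw [ht0, torusElt_eq, Matrix.mul_diagonal, Matrix.diagonal_mul]
  -- trace of C
  have htraceC : LinearMap.trace K _ C = s * s := by
    rw [trace_matrix_end]
    have : ∀ p : Fin (2*n+1) × Fin (2*n+1),
        (C (Matrix.single p.1 p.2 1)) p.1 p.2 = d p.1 * d p.2 := by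
      rintro ⟨i, j⟩
      rw [hCapp, e1, Matrix.single_apply_same, mul_one]
    rw [Finset.sum_congr rfl fun p _ => this p, Fintype.sum_prod_type, hs0,
      Finset.sum_mul_sum]
  -- trace of C ∘ P
  have htraceCP : LinearMap.trace K _ (C ∘ₗ P) = s * s + (2 * (n : K) + 1) := by
    rw [trace_matrix_end]
    have key : ∀ p : Fin (2*n+1) × Fin (2*n+1),
        ((C ∘ₗ P) (Matrix.single p.1 p.2 1)) p.1 p.2
          = d p.1 * d p.2 + (if p.2 = p.1.rev then (1:K) else 0) := by
      rintro ⟨i, j⟩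
      rw [LinearMap.comp_apply, hCapp, hP0, soDefMap_apply, e1, Matrix.add_apply,
        antidiagJ_mul, mul_antidiagJ, Matrix.transpose_apply,
        Matrix.single_apply_same]
      by_cases hij : j = i.rev
      · have hji : i = j.rev := by rw [hij, Fin.rev_rev]
        have hv : Matrix.single i j (1:K) j.rev i.rev = 1 := by
          rw [← hji, ← hij]; exact Matrix.single_apply_same i j 1
        rw [hv, if_pos hij]
        have h2 : d j = d i := by rw [hij, hd0, torusFun_rev hab]
        have h3 : d i * d i = 1 := torusFun_sq i
        rw [h2]
        have h4 : d i * (1 + 1) * d i = d i * d i * 2 := by ring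
        have h5 : d i * d i + 1 = d i * d i * 2 - (d i * d i - 1) := by ring
        rw [h4, h5, h3, sub_self, sub_zero]
      · have hv : Matrix.single i j (1:K) j.rev i.rev = 0 := by
          apply Matrix.single_apply_of_ne
          intro h
          exact hij h.2
        rw [hv, if_neg hij]
        ring
    rw [Finset.sum_congr rfl fun p _ => key p, Finset.sum_add_distrib]
    congr 1
    · rw [Fintype.sum_prod_type, hs0, Finset.sum_mul_sum]
    · rw [Fintype.sum_prod_type]
      have : ∀ i : Fin (2*n+1),
          (∑ j : Fin (2*n+1), if j = i.rev then (1:K) else 0) = 1 := by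
        intro i; simp
      rw [Finset.sum_congr rfl fun i _ => this i, Finset.sum_const, Finset.card_univ,
        Fintype.card_fin, nsmul_eq_mul]
      push_cast
      ring
  -- trace of f
  have hfsplit : f = C - (2⁻¹ : K) • (C ∘ₗ P) := by
    refine LinearMap.ext fun A => ?_
    simp only [hf0, LinearMap.comp_apply, hRapp, map_sub, _root_.map_smul,
      LinearMap.sub_apply, LinearMap.smul_apply]
  have htracef : LinearMap.trace K _ f = s * s - 2⁻¹ * (s * s + (2 * (n : K) + 1)) := by
    rw [hfsplit, map_sub, _root_.map_smul, htraceC, htraceCP, smul_eq_mul]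
  -- the value of s
  have hs : s = 2 * (a : K) - 2 * (b : K) + 1 := by
    rw [hs0, hd0]
    have hrange : (∑ i : Fin (2*n+1), torusFun K n a b i)
        = ∑ i ∈ Finset.range (2*n+1), (if i < a then (1:K) else if i < n then -1
            else if i = n then 1 else if i ≤ n + b then -1 else 1) := by
      rw [← Fin.sum_univ_eq_sum_range]
      rfl
    rw [hrange, Finset.range_eq_Ico,
      ← Finset.sum_Ico_consecutive _ (Nat.zero_le a) (by omega : a ≤ 2*n+1),
      ← Finset.sum_Ico_consecutive _ (by omega : a ≤ n) (by omega : n ≤ 2*n+1),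
      ← Finset.sum_Ico_consecutive _ (by omega : n ≤ n+1) (by omega : n+1 ≤ 2*n+1),
      ← Finset.sum_Ico_consecutive _ (by omega : n+1 ≤ n+b+1) (by omega : n+b+1 ≤ 2*n+1)]
    have p1 : (∑ i ∈ Finset.Ico 0 a, (if i < a then (1:K) else if i < n then -1
        else if i = n then 1 else if i ≤ n + b then -1 else 1)) = (a : K) := by
      rw [Finset.sum_congr rfl (fun i hi => ?_), Finset.sum_const, Nat.card_Ico,
        nsmul_eq_mul, mul_one, Nat.sub_zero]
      rw [Finset.mem_Ico] at hi
      simp only [if_pos hi.2]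
    have p2 : (∑ i ∈ Finset.Ico a n, (if i < a then (1:K) else if i < n then -1
        else if i = n then 1 else if i ≤ n + b then -1 else 1)) = -(b : K) := by
      rw [Finset.sum_congr rfl (fun i hi => ?_), Finset.sum_const, Nat.card_Ico,
        (by omega : n - a = b), nsmul_eq_mul, mul_neg_one]
      rw [Finset.mem_Ico] at hi
      rw [if_neg (by omega), if_pos hi.2]
    have p3 : (∑ i ∈ Finset.Ico n (n+1), (if i < a then (1:K) else if i < n then -1
        else if i = n then 1 else if i ≤ n + b then -1 else 1)) = 1 := by
      rw [Finset.sum_congr rfl (fun i hi => ?_), Finset.sum_const, Nat.card_Ico,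
        (by omega : n + 1 - n = 1), one_nsmul]
      rw [Finset.mem_Ico] at hi
      rw [if_neg (by omega), if_neg (by omega), if_pos (by omega)]
    have p4 : (∑ i ∈ Finset.Ico (n+1) (n+b+1), (if i < a then (1:K) else if i < n then -1
        else if i = n then 1 else if i ≤ n + b then -1 else 1)) = -(b : K) := by
      rw [Finset.sum_congr rfl (fun i hi => ?_), Finset.sum_const, Nat.card_Ico,
        (by omega : n + b + 1 - (n+1) = b), nsmul_eq_mul, mul_neg_one]
      rw [Finset.mem_Ico] at hi
      rw [if_neg (by omega), if_neg (by omega), if_neg (by omega), if_pos (by omega)]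
    have p5 : (∑ i ∈ Finset.Ico (n+b+1) (2*n+1), (if i < a then (1:K) else if i < n then -1
        else if i = n then 1 else if i ≤ n + b then -1 else 1)) = (a : K) := by
      rw [Finset.sum_congr rfl (fun i hi => ?_), Finset.sum_const, Nat.card_Ico,
        (by omega : 2*n + 1 - (n+b+1) = a), nsmul_eq_mul, mul_one]
      rw [Finset.mem_Ico] at hi
      rw [if_neg (by omega), if_neg (by omega), if_neg (by omega), if_neg (by omega)]
    rw [p1, p2, p3, p4, p5]
    ring
  have hn : (n : K) = (a : K) + (b : K) := by
    rw [← hab]; push_cast; ring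
  rw [htracef, hs, hn]
  field_simp
  ring

end Aux

/-- For `t = diag(1_a, −1_b, 1, −1_b, 1_a) ∈ SO_{2n+1}` with `a + b = n`,
the trace of the adjoint action of `t` (i.e. `A ↦ t A t⁻¹ = t A t`) on the Lie algebra of
`SO_{2n+1}` equals `2(a−b)² + 2(a−b) − n`. -/
theorem stmt2 (K : Type*) [Field K] [CharZero K] (n a b : ℕ) (hab : a + b = n)
    (Ad : soLie K n →ₗ[K] soLie K n)
    (hAd : ∀ A : soLie K n,
      (↑(Ad A) : Matrix (Fin (2 * n + 1)) (Fin (2 * n + 1)) K) =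
        torusElt K n a b * (↑A : Matrix (Fin (2 * n + 1)) (Fin (2 * n + 1)) K) *
          torusElt K n a b) :
    LinearMap.trace K ↥(soLie K n) Ad =
      2 * ((a : K) - (b : K)) ^ 2 + 2 * ((a : K) - (b : K)) - (n : K) :=
  stmt2' hab Ad hAd two_ne_zero
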